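/- Let f : C' → C be a surjective function such that every fiber of f has exactly d elements (a d-to-1 cover). Then the induced map Sym^m f : Sym^m C' → Sym^m C applying f elementwise to multisets is surjective, and the fiber of Sym^m f over any multiset of m distinct points of C has exactly d^m elements. -/

import Mathlib

private theorem fiber_card_aux {C C' : Type*} (f : C' → C) (d : ℕ)
    (hfib : ∀ c : C, Nat.card {x : C' // f x = c} = d) :
    ∀ s : Multiset C, s.Nodup →
      Nat.card {t : Multiset C' // t.map f = s} = d ^ Multiset.card s := by
  intro s
  induction s using Multiset.induction with
  | empty =>
    intro _
    have hu : Unique {t : Multiset C' // t.map f = 0} := by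
      refine ⟨⟨⟨0, by simp⟩⟩, ?_⟩
      rintro ⟨t, ht⟩
      rw [Multiset.map_eq_zero] at ht
      exact Subtype.ext ht
    simp [Nat.card_unique]
  | cons a s ih =>
    intro hnd
    rw [Multiset.nodup_cons] at hnd
    obtain ⟨ha, hs⟩ := hnd
    have hbij : Function.Bijective
        (fun p : {x : C' // f x = a} × {t : Multiset C' // t.map f = s} =>
          (⟨p.1.1 ::ₘ p.2.1, by simp [p.1.2, p.2.2]⟩ :
            {t : Multiset C' // t.map f = a ::ₘ s})) := by
      constructor
      · rintro ⟨⟨x, hx⟩, ⟨t, ht⟩⟩ ⟨⟨x', hx'⟩, ⟨t', ht'⟩⟩ h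
        simp only [Subtype.mk.injEq] at h
        rcases (Multiset.cons_eq_cons).1 h with ⟨h1, h2⟩ | ⟨hne, cs, h1, h2⟩
        · simp [h1, h2]
        · exfalso
          apply ha
          have hmem : f x' ∈ t.map f := by
            rw [h1]; exact Multiset.mem_map_of_mem f (Multiset.mem_cons_self _ _)
          rw [ht, hx'] at hmem
          exact hmem
      · classical
        rintro ⟨u, hu⟩
        have ha' : a ∈ u.map f := by rw [hu]; exact Multiset.mem_cons_self _ _
        obtain ⟨x, hxu, hfx⟩ := Multiset.mem_map.1 ha'
        have hcons : x ::ₘ u.erase x = u := Multiset.cons_erase hxu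
        have herase : (u.erase x).map f = s := by
          have h2 : (x ::ₘ u.erase x).map f = a ::ₘ s := by rw [hcons, hu]
          rw [Multiset.map_cons, hfx] at h2
          exact (Multiset.cons_inj_right a).1 h2
        exact ⟨⟨⟨x, hfx⟩, ⟨u.erase x, herase⟩⟩, Subtype.ext (by simp [hcons])⟩
    rw [← Nat.card_eq_of_bijective _ hbij, Nat.card_prod, hfib a, ih hs]
    simp [pow_succ, mul_comm]

theorem stmt4 {C C' : Type*} (f : C' → C) (d m : ℕ)
    (hsurj : Function.Surjective f)
    (hfib : ∀ c : C, Nat.card {x : C' // f x = c} = d) :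
    Function.Surjective (Sym.map f : Sym C' m → Sym C m) ∧
      ∀ s : Sym C m, (s : Multiset C).Nodup →
        Nat.card {t : Sym C' m // Sym.map f t = s} = d ^ m := by
  constructor
  · intro s
    refine ⟨Sym.map (Function.surjInv hsurj) s, ?_⟩
    rw [Sym.map_map]
    have hcomp : f ∘ Function.surjInv hsurj = id :=
      funext fun b => Function.surjInv_eq hsurj b
    rw [hcomp, Sym.map_id]
  · intro s hnd
    have hbij : Function.Bijective
        (fun t : {t : Sym C' m // Sym.map f t = s} =>
          (⟨(t.1 : Multiset C'), by
              have := congrArg (Subtype.val) t.2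
              simpa using this⟩ :
            {t : Multiset C' // t.map f = (s : Multiset C)})) := by
      constructor
      · rintro ⟨⟨t, ht⟩, h1⟩ ⟨⟨t', ht'⟩, h1'⟩ h
        simp only [Subtype.mk.injEq] at h
        have h2 : t = t' := congrArg Subtype.val h
        exact Subtype.ext (Subtype.ext h2)
      · rintro ⟨u, hu⟩
        have hcard : Multiset.card u = m := by
          have := congrArg Multiset.card hu
          simpa [s.2] using this
        exact ⟨⟨⟨u, hcard⟩, Subtype.ext hu⟩, rfl⟩
    rw [Nat.card_eq_of_bijective _ hbij, fiber_card_aux f d hfib _ hnd]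
    congr 1
    exact s.2
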